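/- Let A ∈ ℝ^{m×n}, b ∈ ℝ^m and λ > 0. Suppose V_k ∈ ℝ^{n×k} has orthonormal columns whose span equals the Krylov subspace K_k(AᵀA, Aᵀb) = span{Aᵀb, (AᵀA)Aᵀb, …, (AᵀA)^{k−1}Aᵀb} (assumed to have dimension k). Let ŷ ∈ ℝ^k be the unique minimizer of y ↦ ‖b − A V_k y‖₂² + λ‖y‖₂². Then V_k ŷ is the unique minimizer of the Tikhonov functional x ↦ ‖b − A x‖₂² + λ‖x‖₂² over the shifted Krylov subspace K_k(AᵀA + λI_n, Aᵀb) (the subspace over which k steps of conjugate gradient applied to the Tikhonov problem minimize). Thus first-regularize-then-project and first-project-then-regularize produce the same iterate. -/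

import Mathlib

open Matrix

/-- The Krylov subspace `K_k(M, v) = span{v, Mv, …, M^{k-1}v}`. -/
def krylov {n : ℕ} (M : Matrix (Fin n) (Fin n) ℝ) (v : Fin n → ℝ) (k : ℕ) :
    Submodule ℝ (Fin n → ℝ) :=
  Submodule.span ℝ (Set.range fun i : Fin k => (M ^ (i : ℕ)) *ᵥ v)

/-- The standard-form Tikhonov functional `x ↦ ‖b - Ax‖₂² + λ‖x‖₂²`. -/
noncomputable def tik {m n : ℕ} (A : Matrix (Fin m) (Fin n) ℝ) (b : Fin m → ℝ)
    (lam : ℝ) (x : Fin n → ℝ) : ℝ :=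
  (∑ i, (b - A *ᵥ x) i ^ 2) + lam * ∑ j, x j ^ 2

lemma sum_mulVec' {n : ℕ} {ι : Type*} (s : Finset ι)
    (f : ι → Matrix (Fin n) (Fin n) ℝ) (v : Fin n → ℝ) :
    (∑ i ∈ s, f i) *ᵥ v = ∑ i ∈ s, f i *ᵥ v := by
  classical
  induction s using Finset.induction with
  | empty => simp
  | insert a s h ih => simp [Finset.sum_insert h, Matrix.add_mulVec, ih]

lemma krylov_shift_le {n : ℕ} (M : Matrix (Fin n) (Fin n) ℝ) (c : ℝ)
    (v : Fin n → ℝ) (k : ℕ) :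
    krylov (M + c • 1) v k ≤ krylov M v k := by
  rw [krylov, Submodule.span_le]
  rintro _ ⟨i, rfl⟩
  have hcomm : Commute M (c • (1 : Matrix (Fin n) (Fin n) ℝ)) := by
    simpa using (Commute.one_right M).smul_right c
  have hpow := hcomm.add_pow (i : ℕ)
  simp only [hpow, sum_mulVec']
  refine Submodule.sum_mem _ ?_
  intro j hj
  have hterm : (M ^ j * (c • (1 : Matrix (Fin n) (Fin n) ℝ)) ^ ((i : ℕ) - j) *
      ((i : ℕ).choose j : Matrix (Fin n) (Fin n) ℝ)) *ᵥ v
      = (c ^ ((i : ℕ) - j) * ((i : ℕ).choose j : ℝ)) • (M ^ j *ᵥ v) := by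
    have h1 : ((i : ℕ).choose j : Matrix (Fin n) (Fin n) ℝ)
        = (((i : ℕ).choose j : ℝ)) • (1 : Matrix (Fin n) (Fin n) ℝ) := by
      rw [← Matrix.diagonal_natCast, Matrix.smul_one_eq_diagonal]
    rw [h1, smul_pow, one_pow]
    simp [mul_smul_comm, smul_mul_assoc, Matrix.smul_mulVec, smul_smul, mul_comm]
  rw [hterm]
  refine Submodule.smul_mem _ _ ?_
  have hjk : j < k := lt_of_le_of_lt (Nat.lt_succ_iff.mp (Finset.mem_range.mp hj)) i.2
  exact Submodule.subset_span ⟨⟨j, hjk⟩, rfl⟩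

lemma krylov_shift_eq {n : ℕ} (M : Matrix (Fin n) (Fin n) ℝ) (c : ℝ)
    (v : Fin n → ℝ) (k : ℕ) :
    krylov (M + c • 1) v k = krylov M v k := by
  refine le_antisymm (krylov_shift_le M c v k) ?_
  have := krylov_shift_le (M + c • 1) (-c) v k
  simpa [add_assoc, ← add_smul] using this

lemma sum_sq_mulVec {n k : ℕ} (V : Matrix (Fin n) (Fin k) ℝ)
    (hV : Vᵀ * V = 1) (y : Fin k → ℝ) :
    ∑ j, (V *ᵥ y) j ^ 2 = ∑ j, y j ^ 2 := by
  have h : (V *ᵥ y) ⬝ᵥ (V *ᵥ y) = y ⬝ᵥ y := by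
    rw [Matrix.dotProduct_mulVec, ← Matrix.mulVec_transpose, Matrix.mulVec_mulVec,
      hV, Matrix.one_mulVec]
  simpa [dotProduct, sq] using h

/-- First-regularize-then-project equals first-project-then-regularize:
if the columns of `V` form an orthonormal basis of the Krylov subspace
`K_k(AᵀA, Aᵀb)` (of dimension `k`) and `ŷ` is the unique minimizer of the
projected Tikhonov problem, then `V ŷ` is the unique minimizer of the
Tikhonov functional over the shifted Krylov subspace `K_k(AᵀA + λI, Aᵀb)`. -/
theorem project_then_regularize_eq_regularize_then_project
    {m n k : ℕ}
    (A : Matrix (Fin m) (Fin n) ℝ) (b : Fin m → ℝ) (lam : ℝ) (hlam : 0 < lam)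
    (V : Matrix (Fin n) (Fin k) ℝ)
    (hV : Vᵀ * V = 1)
    (hspan : LinearMap.range V.mulVecLin = krylov (Aᵀ * A) (Aᵀ *ᵥ b) k)
    (hdim : Module.finrank ℝ (krylov (Aᵀ * A) (Aᵀ *ᵥ b) k) = k)
    (yhat : Fin k → ℝ)
    (hyhat : ∀ y : Fin k → ℝ, y ≠ yhat →
      (∑ i, (b - A *ᵥ (V *ᵥ yhat)) i ^ 2) + lam * ∑ j, yhat j ^ 2 <
      (∑ i, (b - A *ᵥ (V *ᵥ y)) i ^ 2) + lam * ∑ j, y j ^ 2) :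
    V *ᵥ yhat ∈ krylov (Aᵀ * A + lam • (1 : Matrix (Fin n) (Fin n) ℝ)) (Aᵀ *ᵥ b) k ∧
    ∀ x ∈ krylov (Aᵀ * A + lam • (1 : Matrix (Fin n) (Fin n) ℝ)) (Aᵀ *ᵥ b) k,
      x ≠ V *ᵥ yhat → tik A b lam (V *ᵥ yhat) < tik A b lam x := by
  rw [krylov_shift_eq, ← hspan]
  constructor
  · exact ⟨yhat, rfl⟩
  · rintro x ⟨y, rfl⟩ hne
    have hxy : V.mulVecLin y = V *ᵥ y := rfl
    have hy : y ≠ yhat := by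
      intro h
      exact hne (by rw [hxy, h])
    have := hyhat y hy
    simpa [tik, hxy, sum_sq_mulVec V hV] using this
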